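/- Let A, B be n×n complex positive definite matrices. Then the product AB has spectrum contained in (0,∞), and if (AB)^{1/2} denotes the unique square root of AB with positive spectrum, then the adjoint of (AB)^{1/2} equals (BA)^{1/2}. In particular (AB)^{1/2} + (BA)^{1/2} is Hermitian. -/

import Mathlib

open Matrix ComplexOrder Polynomial

section OldSqrt

variable {m 𝕜 : Type*} [Fintype m] [RCLike 𝕜] [DecidableEq m]

/-- The positive semidefinite square root of a positive semidefinite matrix
(as defined in Mathlib of December 2024; removed since). -/
noncomputable def Matrix.PosSemidef.sqrt {A : Matrix m m 𝕜} (hA : A.PosSemidef) : Matrix m m 𝕜 :=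
  hA.isHermitian.eigenvectorUnitary.1 * diagonal ((↑) ∘ (√·) ∘ hA.isHermitian.eigenvalues) *
  (star hA.isHermitian.eigenvectorUnitary : Matrix m m 𝕜)

lemma Matrix.PosSemidef.posSemidef_sqrt {A : Matrix m m 𝕜} (hA : A.PosSemidef) :
    PosSemidef hA.sqrt := by
  have hd : PosSemidef (diagonal ((↑) ∘ (√·) ∘ hA.isHermitian.eigenvalues : m → 𝕜)) := by
    apply PosSemidef.diagonal
    intro i
    simp only [Pi.zero_apply, Function.comp_apply]
    exact RCLike.ofReal_nonneg.mpr (Real.sqrt_nonneg _)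
  have h := hd.mul_mul_conjTranspose_same (hA.isHermitian.eigenvectorUnitary : Matrix m m 𝕜)
  simpa [Matrix.PosSemidef.sqrt, Matrix.star_eq_conjTranspose] using h

end OldSqrt

lemma Matrix.PosSemidef.sqrt_mul_self {m 𝕜 : Type*} [Fintype m] [RCLike 𝕜] [DecidableEq m]
    {A : Matrix m m 𝕜} (hA : A.PosSemidef) : hA.sqrt * hA.sqrt = A := by
  have hUU : (star hA.isHermitian.eigenvectorUnitary : Matrix m m 𝕜) *
      (hA.isHermitian.eigenvectorUnitary : Matrix m m 𝕜) = 1 :=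
    Unitary.coe_star_mul_self _
  have hD : diagonal ((↑) ∘ (√·) ∘ hA.isHermitian.eigenvalues : m → 𝕜) *
      diagonal ((↑) ∘ (√·) ∘ hA.isHermitian.eigenvalues : m → 𝕜) =
      diagonal (RCLike.ofReal ∘ hA.isHermitian.eigenvalues) := by
    rw [diagonal_mul_diagonal]
    congr 1
    funext i
    simp only [Function.comp_apply]
    rw [← RCLike.ofReal_mul, Real.mul_self_sqrt (hA.eigenvalues_nonneg i)]
  conv_rhs => rw [hA.isHermitian.spectral_theorem, Unitary.conjStarAlgAut_apply]
  simp only [Matrix.PosSemidef.sqrt, mul_assoc]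
  rw [← mul_assoc (star _ : Matrix m m 𝕜) (_ : Matrix m m 𝕜), hUU, one_mul,
    ← mul_assoc (diagonal _) (diagonal _), hD]


namespace Heron

variable {n : ℕ}

def WeakMaj {n : ℕ} (x y : Fin n → ℝ) : Prop :=
  ∀ s : Finset (Fin n), ∃ t : Finset (Fin n),
    t.card = s.card ∧ ∑ i ∈ s, x i ≤ ∑ i ∈ t, y i

def Maj {n : ℕ} (x y : Fin n → ℝ) : Prop :=
  WeakMaj x y ∧ ∑ i, x i = ∑ i, y i

lemma sandwich_posSemidef {S T : Matrix (Fin n) (Fin n) ℂ} (hS : S.IsHermitian)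
    (hT : T.PosSemidef) : (S * T * S).PosSemidef := by
  have h := hT.mul_mul_conjTranspose_same S
  rwa [hS.eq] at h

noncomputable def geomMean {A B : Matrix (Fin n) (Fin n) ℂ}
    (hA : A.PosDef) (hB : B.PosDef) : Matrix (Fin n) (Fin n) ℂ :=
  hA.posSemidef.sqrt *
    (sandwich_posSemidef hA.posSemidef.posSemidef_sqrt.isHermitian.inv
        hB.posSemidef).sqrt *
    hA.posSemidef.sqrt

lemma geomMean_posSemidef {A B : Matrix (Fin n) (Fin n) ℂ}
    (hA : A.PosDef) (hB : B.PosDef) : (geomMean hA hB).PosSemidef :=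
  sandwich_posSemidef hA.posSemidef.posSemidef_sqrt.isHermitian
    (Matrix.PosSemidef.posSemidef_sqrt _)

noncomputable def specMean {A B : Matrix (Fin n) (Fin n) ℂ}
    (hA : A.PosDef) (hB : B.PosDef) : Matrix (Fin n) (Fin n) ℂ :=
  (geomMean_posSemidef hA.inv hB).sqrt * A * (geomMean_posSemidef hA.inv hB).sqrt

def HasPosSpectrum (M : Matrix (Fin n) (Fin n) ℂ) : Prop :=
  ∀ z ∈ spectrum ℂ M, 0 < z.re ∧ z.im = 0

def IsPrincipalSqrt (M S : Matrix (Fin n) (Fin n) ℂ) : Prop :=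
  S * S = M ∧ HasPosSpectrum S

noncomputable def absMat (Y : Matrix (Fin n) (Fin n) ℂ) : Matrix (Fin n) (Fin n) ℂ :=
  (Matrix.posSemidef_conjTranspose_mul_self Y).sqrt

noncomputable def posPart (H : Matrix (Fin n) (Fin n) ℂ) : Matrix (Fin n) (Fin n) ℂ :=
  ((1 : ℂ) / 2) • (absMat H + H)

lemma mem_spectrum_iff_det (M : Matrix (Fin n) (Fin n) ℂ) (μ : ℂ) :
    μ ∈ spectrum ℂ M ↔ (algebraMap ℂ (Matrix (Fin n) (Fin n) ℂ) μ - M).det = 0 := by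
  rw [spectrum.mem_iff, Matrix.isUnit_iff_isUnit_det, isUnit_iff_ne_zero, not_ne_iff]

lemma eval_charpoly' (M : Matrix (Fin n) (Fin n) ℂ) (μ : ℂ) :
    M.charpoly.eval μ = (algebraMap ℂ (Matrix (Fin n) (Fin n) ℂ) μ - M).det := by
  rw [Matrix.charpoly, ← coe_evalRingHom, RingHom.map_det]
  congr 1
  ext i j
  simp [charmatrix_apply, Matrix.algebraMap_matrix_apply, Matrix.sub_apply,
    Matrix.diagonal_apply, Matrix.map_apply]
  split <;> simp

lemma mem_spectrum_of_root {M : Matrix (Fin n) (Fin n) ℂ} {μ : ℂ}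
    (h : M.charpoly.eval μ = 0) : μ ∈ spectrum ℂ M := by
  rw [mem_spectrum_iff_det, ← eval_charpoly', h]

lemma spectrum_mul_comm' {a b : Matrix (Fin n) (Fin n) ℂ} (hab : IsUnit (a * b))
    (hba : IsUnit (b * a)) : spectrum ℂ (a * b) = spectrum ℂ (b * a) := by
  have h := spectrum.nonzero_mul_comm (𝕜 := ℂ) a b
  ext z
  by_cases hz : z = 0
  · subst hz
    simp [spectrum.zero_mem_iff, hab, hba]
  · constructor
    · intro hm
      have : z ∈ spectrum ℂ (b * a) \ {0} := h ▸ ⟨hm, hz⟩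
      exact this.1
    · intro hm
      have : z ∈ spectrum ℂ (a * b) \ {0} := h.symm ▸ ⟨hm, hz⟩
      exact this.1

lemma spectrum_of_hermitian {M : Matrix (Fin n) (Fin n) ℂ} (hM : M.IsHermitian) :
    spectrum ℂ M = Set.range (fun i => (hM.eigenvalues i : ℂ)) := by
  rw [hM.spectrum_eq_image_range]
  ext z
  simp [Function.comp]

lemma hasPosSpectrum_of_posSemidef_unit {M : Matrix (Fin n) (Fin n) ℂ}
    (hM : M.PosSemidef) (hU : IsUnit M) : HasPosSpectrum M := by
  intro z hz
  rw [spectrum_of_hermitian hM.1] at hz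
  obtain ⟨i, hi⟩ := hz
  have h0 : hM.1.eigenvalues i ≠ 0 := by
    intro h
    have : (0 : ℂ) ∈ spectrum ℂ M := by
      rw [spectrum_of_hermitian hM.1]
      exact ⟨i, by simp [h]⟩
    exact (((spectrum.zero_mem_iff ℂ).mp this)) hU
  have hnn := hM.eigenvalues_nonneg i
  subst hi
  constructor
  · simpa using lt_of_le_of_ne hnn (Ne.symm h0)
  · simp

lemma star_mem_spectrum_conjTranspose {M : Matrix (Fin n) (Fin n) ℂ} {z : ℂ}
    (hz : z ∈ spectrum ℂ M) : (starRingEnd ℂ) z ∈ spectrum ℂ Mᴴ := by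
  rw [mem_spectrum_iff_det] at hz ⊢
  have : algebraMap ℂ (Matrix (Fin n) (Fin n) ℂ) ((starRingEnd ℂ) z) - Mᴴ
      = (algebraMap ℂ (Matrix (Fin n) (Fin n) ℂ) z - M)ᴴ := by
    rw [conjTranspose_sub]
    congr 1
    rw [Matrix.algebraMap_eq_diagonal, Matrix.algebraMap_eq_diagonal,
      Matrix.diagonal_conjTranspose]
    simp [funext_iff]
  rw [this, Matrix.det_conjTranspose, hz, star_zero]

lemma sqrt_unique {S T : Matrix (Fin n) (Fin n) ℂ}
    (hS : HasPosSpectrum S) (hT : HasPosSpectrum T) (h : S * S = T * T) : S = T := by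
  rcases Nat.eq_zero_or_pos n with hn | hn
  · subst hn; exact Subsingleton.elim S T
  set X := S - T with hX
  have hcomm : S * X = X * (-T) := by
    have h2 : S * X - X * (-T) = S * S - T * T := by rw [hX]; noncomm_ring
    rw [h, sub_self, sub_eq_zero] at h2
    exact h2
  have hpow : ∀ k : ℕ, S ^ k * X = X * (-T) ^ k := by
    intro k
    induction k with
    | zero => simp
    | succ k ih =>
      rw [pow_succ, pow_succ, ← mul_assoc, ← ih, mul_assoc, hcomm, ← mul_assoc, ih,
        mul_assoc]
  have hpoly : ∀ p : ℂ[X], (aeval S) p * X = X * (aeval (-T)) p := by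
    intro p
    rw [aeval_eq_sum_range (p := p) S, aeval_eq_sum_range (p := p) (-T),
      Finset.sum_mul, Finset.mul_sum]
    refine Finset.sum_congr rfl fun i _ => ?_
    rw [smul_mul_assoc, mul_smul_comm, hpow i]
  have hch := hpoly (Matrix.charpoly S)
  rw [Matrix.aeval_self_charpoly, zero_mul] at hch
  have hunit : IsUnit ((aeval (-T)) (Matrix.charpoly S)) := by
    by_contra hu
    have h0 : (0 : ℂ) ∈ spectrum ℂ ((aeval (-T)) (Matrix.charpoly S)) :=
      spectrum.zero_mem ℂ hu
    rw [spectrum.map_polynomial_aeval_of_degree_pos (-T) (Matrix.charpoly S)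
      (by rw [Matrix.charpoly_degree_eq_dim]; exact_mod_cast (by simpa using hn))] at h0
    obtain ⟨μ, hμ, hev⟩ := h0
    have hμT : -μ ∈ spectrum ℂ T := by
      have := spectrum.neg_eq (R := ℂ) T
      rw [← this] at hμ
      simpa using hμ
    have h1 : 0 < (-μ).re := (hT _ hμT).1
    have h2 : μ ∈ spectrum ℂ S := mem_spectrum_of_root hev
    have h3 : 0 < μ.re := (hS _ h2).1
    simp only [Complex.neg_re] at h1
    linarith
  obtain ⟨u, hu⟩ := hunit
  have : X = 0 := by
    have h4 := congrArg (fun M => M * (↑u⁻¹ : Matrix (Fin n) (Fin n) ℂ)) hch.symm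
    simp only [← hu, zero_mul, mul_assoc, ← Units.val_mul, mul_inv_cancel,
      Units.val_one, mul_one] at h4
    exact h4
  rw [hX, sub_eq_zero] at this
  exact this

/-- `AB` has positive spectrum, its principal square root exists
uniquely, and the adjoint of `(AB)^{1/2}` is `(BA)^{1/2}`; in particular
`(AB)^{1/2} + (BA)^{1/2}` is Hermitian. -/
theorem principal_sqrt_of_product {n : ℕ} (A B : Matrix (Fin n) (Fin n) ℂ)
    (hA : A.PosDef) (hB : B.PosDef) :
    HasPosSpectrum (A * B) ∧
    (∃! S : Matrix (Fin n) (Fin n) ℂ, IsPrincipalSqrt (A * B) S) ∧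
    ∀ S : Matrix (Fin n) (Fin n) ℂ, IsPrincipalSqrt (A * B) S →
      IsPrincipalSqrt (B * A) Sᴴ ∧ (S + Sᴴ).IsHermitian := by
  set R := hA.posSemidef.sqrt with hRdef
  have hRR : R * R = A := hA.posSemidef.sqrt_mul_self
  have hRherm : R.IsHermitian := hA.posSemidef.posSemidef_sqrt.isHermitian
  have hRunit : IsUnit R := by
    have hAu := hA.isUnit
    rw [Matrix.isUnit_iff_isUnit_det, ← hRR, Matrix.det_mul] at hAu
    rw [Matrix.isUnit_iff_isUnit_det]
    exact isUnit_of_mul_isUnit_left hAu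
  have hMps : (R * B * R).PosSemidef := by
    have h := hB.posSemidef.mul_mul_conjTranspose_same R
    rwa [hRherm.eq] at h
  have hMunit : IsUnit (R * B * R) := (hRunit.mul hB.isUnit).mul hRunit
  set C := hMps.sqrt with hCdef
  have hCC : C * C = R * B * R := hMps.sqrt_mul_self
  have hCps : C.PosSemidef := hMps.posSemidef_sqrt
  have hCunit : IsUnit C := by
    have hMu := hMunit
    rw [Matrix.isUnit_iff_isUnit_det, ← hCC, Matrix.det_mul] at hMu
    rw [Matrix.isUnit_iff_isUnit_det]
    exact isUnit_of_mul_isUnit_left hMu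
  have hCpos : HasPosSpectrum C := hasPosSpectrum_of_posSemidef_unit hCps hCunit
  have hABunit : IsUnit (A * B) := hA.isUnit.mul hB.isUnit
  -- spectrum of A*B equals spectrum of R*B*R
  have hσ : spectrum ℂ (A * B) = spectrum ℂ (R * B * R) := by
    have h1 : A * B = R * (R * B) := by rw [← mul_assoc, hRR]
    have hu1 : IsUnit (R * (R * B)) := by rw [← h1]; exact hABunit
    have hu2 : IsUnit (R * B * R) := hMunit
    rw [h1, spectrum_mul_comm' hu1 hu2]
  have hABpos : HasPosSpectrum (A * B) := by
    intro z hz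
    exact hasPosSpectrum_of_posSemidef_unit hMps hMunit z (hσ ▸ hz)
  -- existence
  have hRdetu : IsUnit R.det := (Matrix.isUnit_iff_isUnit_det R).mp hRunit
  have hinv1 : R⁻¹ * R = 1 := Matrix.nonsing_inv_mul R hRdetu
  have hinv2 : R * R⁻¹ = 1 := Matrix.mul_nonsing_inv R hRdetu
  have hRinvUnit : IsUnit R⁻¹ := Matrix.isUnit_nonsing_inv_iff.mpr hRunit
  set S₀ := R * C * R⁻¹ with hS₀def
  have hsq : S₀ * S₀ = A * B := by
    have h1 : S₀ * S₀ = R * C * (R⁻¹ * R) * C * R⁻¹ := by rw [hS₀def]; noncomm_ring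
    rw [h1, hinv1, mul_one, mul_assoc R C C, hCC,
      show R * (R * B * R) * R⁻¹ = R * R * B * (R * R⁻¹) by noncomm_ring, hinv2, mul_one, hRR]
  have hS₀spec : HasPosSpectrum S₀ := by
    have hu1 : IsUnit (R * C * R⁻¹) := (hRunit.mul hCunit).mul hRinvUnit
    have hu2 : IsUnit (R⁻¹ * (R * C)) := hRinvUnit.mul (hRunit.mul hCunit)
    have hσ2 : spectrum ℂ S₀ = spectrum ℂ C := by
      rw [hS₀def, spectrum_mul_comm' hu1 hu2, ← mul_assoc, hinv1, one_mul]
    intro z hz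
    exact hCpos z (hσ2 ▸ hz)
  refine ⟨hABpos, ⟨S₀, ⟨hsq, hS₀spec⟩, fun T hT => sqrt_unique hT.2 hS₀spec
    (hT.1.trans hsq.symm)⟩, fun S hS => ?_⟩
  have hsqH : Sᴴ * Sᴴ = B * A := by
    rw [← Matrix.conjTranspose_mul, hS.1, Matrix.conjTranspose_mul,
      hA.isHermitian.eq, hB.isHermitian.eq]
  have hspecH : HasPosSpectrum Sᴴ := by
    intro z hz
    have := star_mem_spectrum_conjTranspose hz
    rw [Matrix.conjTranspose_conjTranspose] at this
    obtain ⟨h1, h2⟩ := hS.2 _ this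
    rw [Complex.conj_re] at h1
    rw [Complex.conj_im, neg_eq_zero] at h2
    exact ⟨h1, h2⟩
  exact ⟨⟨hsqH, hspecH⟩, by
    unfold Matrix.IsHermitian
    rw [Matrix.conjTranspose_add, Matrix.conjTranspose_conjTranspose, add_comm]⟩

end Heron
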